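/- Let (X, φ) be a permutation rack, and let x, y ∈ X. Then d((x−y)·w) = −(x−y)·d(w) for all chains w in CR_•(X,φ). Consequently, for any element v in the kernel of the augmentation ℤX → ℤ, left multiplication by v is a chain map CR_•(X,φ)[1] → CR_•(X,φ), where the suspension has negated differential. -/

import Mathlib

/-- Rack chains: free abelian group on `n`-tuples. -/
abbrev CR (X : Type) (n : ℕ) : Type := (Fin n → X) →₀ ℤ

/-- The monomial basis element. -/
noncomputable def mon {X : Type} {n : ℕ} (w : Fin n → X) : CR X n := Finsupp.single w 1

/-- Delete the `(i+1)`-st entry (1-indexed `k = i+1`). -/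
def del {X : Type} {n : ℕ} (w : Fin (n+1) → X) (i : Fin n) : Fin n → X :=
  fun j => if (j : ℕ) < (i : ℕ) then w j.castSucc else w j.succ

/-- Delete the `(i+1)`-st entry and act with it on all later entries. -/
def act {X : Type} (op : X → X → X) {n : ℕ} (w : Fin (n+1) → X) (i : Fin n) : Fin n → X :=
  fun j => if (j : ℕ) < (i : ℕ) then w j.castSucc else op (w i.castSucc) (w j.succ)

/-- Rack differential on a monomial. -/
noncomputable def dMon {X : Type} (op : X → X → X) {n : ℕ} (w : Fin (n+1) → X) : CR X n :=
  ∑ i : Fin n, ((-1 : ℤ) ^ (i : ℕ)) • (mon (del w i) - mon (act op w i))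

/-- The rack differential `CR_{n+1} → CR_n`. -/
noncomputable def d {X : Type} (op : X → X → X) (n : ℕ) : CR X (n+1) →+ CR X n :=
  Finsupp.liftAddHom fun w => zmultiplesHom _ (dMon op w)

/-- Left concatenation `w ↦ x·w`. -/
noncomputable def consHom {X : Type} (x : X) (n : ℕ) : CR X n →+ CR X (n+1) :=
  Finsupp.liftAddHom fun w => zmultiplesHom _ (mon (Fin.cons x w))

/-- Diagonal action of a map `φ` on chains. -/
noncomputable def mapChains {X : Type} (φ : X → X) (n : ℕ) : CR X n →+ CR X n :=
  Finsupp.liftAddHom fun w => zmultiplesHom _ (mon (φ ∘ w))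

/-- Cycles. -/
noncomputable def ZC {X : Type} (op : X → X → X) : (n : ℕ) → AddSubgroup (CR X n)
  | 0 => ⊤
  | (m+1) => (d op m).ker

/-- Boundaries. -/
noncomputable def BC {X : Type} (op : X → X → X) (n : ℕ) : AddSubgroup (CR X n) :=
  (d op n).range

/-- Rack homology. -/
abbrev HR (X : Type) (op : X → X → X) (n : ℕ) : Type :=
  ZC op n ⧸ ((BC op n).addSubgroupOf (ZC op n))

/-- The rack operation of a permutation rack. -/
def permOp {X : Type} (φ : X ≃ X) : X → X → X := fun _ y => φ y

/-- Multiplication by an element of `ℤX`. -/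
noncomputable def mulChain {X : Type} (v : X →₀ ℤ) (n : ℕ) : CR X n →+ CR X (n+1) :=
  ∑ x ∈ v.support, v x • consHom x n

-- basic applications on singles
lemma d_mon {X : Type} (op : X → X → X) {n : ℕ} (w : Fin (n+1) → X) :
    d op n (mon w) = dMon op w := by
  simp [d, mon, Finsupp.liftAddHom_apply_single]

lemma consHom_mon {X : Type} (x : X) {n : ℕ} (w : Fin n → X) :
    consHom x n (mon w) = mon (Fin.cons x w) := by
  simp [consHom, mon, Finsupp.liftAddHom_apply_single]

lemma mapChains_mon {X : Type} (φ : X → X) {n : ℕ} (w : Fin n → X) :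
    mapChains φ n (mon w) = mon (φ ∘ w) := by
  simp [mapChains, mon, Finsupp.liftAddHom_apply_single]

lemma del_cons_zero {X : Type} {n : ℕ} (x : X) (w : Fin (n+1) → X) :
    del (Fin.cons x w) (0 : Fin (n+1)) = w := by
  funext j; simp [del]

lemma act_cons_zero {X : Type} (φ : X ≃ X) {n : ℕ} (x : X) (w : Fin (n+1) → X) :
    act (permOp φ) (Fin.cons x w) (0 : Fin (n+1)) = φ ∘ w := by
  funext j; simp [act, permOp]

lemma del_cons_succ {X : Type} {n : ℕ} (x : X) (w : Fin (n+1) → X) (i : Fin n) :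
    del (Fin.cons x w) i.succ = Fin.cons x (del w i) := by
  funext j
  induction j using Fin.cases with
  | zero => simp [del]
  | succ j =>
    simp only [del, Fin.val_succ, Nat.succ_lt_succ_iff, Fin.cons_succ]
    rw [← Fin.succ_castSucc, Fin.cons_succ]

lemma act_cons_succ {X : Type} (φ : X ≃ X) {n : ℕ} (x : X) (w : Fin (n+1) → X) (i : Fin n) :
    act (permOp φ) (Fin.cons x w) i.succ = Fin.cons x (act (permOp φ) w i) := by
  funext j
  induction j using Fin.cases with
  | zero => simp [act]
  | succ j =>
    simp only [act, Fin.val_succ, Nat.succ_lt_succ_iff, Fin.cons_succ, permOp]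
    rw [← Fin.succ_castSucc, Fin.cons_succ]

lemma dMon_cons {X : Type} (φ : X ≃ X) (x : X) {n : ℕ} (w : Fin (n+1) → X) :
    dMon (permOp φ) (Fin.cons x w) =
      (mon w - mon (φ ∘ w)) - consHom x n (dMon (permOp φ) w) := by
  rw [dMon, Fin.sum_univ_succ]
  simp only [Fin.val_zero, pow_zero, one_smul, del_cons_zero, act_cons_zero φ,
    del_cons_succ, act_cons_succ φ, Fin.val_succ]
  rw [dMon, map_sum]
  have key : ∀ i : Fin n, (-1:ℤ) ^ ((i:ℕ)+1) •
      (mon (Fin.cons x (del w i)) - mon (Fin.cons x (act (permOp φ) w i))) =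
      -(consHom x n ((-1:ℤ) ^ (i:ℕ) • (mon (del w i) - mon (act (permOp φ) w i)))) := by
    intro i
    rw [map_zsmul, map_sub, consHom_mon, consHom_mon, pow_succ]
    module
  simp only [key, Finset.sum_neg_distrib]
  abel

lemma d_consHom {X : Type} (φ : X ≃ X) (x : X) (n : ℕ) (w : CR X (n+1)) :
    d (permOp φ) (n+1) (consHom x (n+1) w) =
      w - mapChains φ (n+1) w - consHom x n (d (permOp φ) n w) := by
  induction w using Finsupp.induction_linear with
  | zero => simp
  | add f g hf hg => simp only [map_add, hf, hg]; abel
  | single u m =>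
    have h : (Finsupp.single u m : CR X (n+1)) = m • mon u := by
      simp [mon, Finsupp.smul_single]
    rw [h, map_zsmul, map_zsmul, map_zsmul, map_zsmul, map_zsmul,
      consHom_mon, d_mon, mapChains_mon, d_mon, dMon_cons φ]
    rw [smul_sub, smul_sub]


/-- `d((x−y)·w) = −(x−y)·d(w)`, and consequently multiplication by any augmentation-zero
element `v ∈ ℤX` is a chain map `CR_•(X,φ)[1] → CR_•(X,φ)`. -/
theorem mul_by_difference_chain_map (X : Type) (φ : X ≃ X) :
    (∀ (n : ℕ) (x y : X) (w : CR X (n+1)),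
      d (permOp φ) (n+1) (consHom x (n+1) w - consHom y (n+1) w) =
        -(consHom x n (d (permOp φ) n w) - consHom y n (d (permOp φ) n w))) ∧
    (∀ v : X →₀ ℤ, (v.sum fun _ m => m) = 0 →
      ∀ (n : ℕ) (w : CR X (n+1)),
        d (permOp φ) (n+1) (mulChain v (n+1) w) = - mulChain v n (d (permOp φ) n w)) := by
  constructor
  · intro n x y w
    rw [map_sub, d_consHom φ, d_consHom φ]
    abel
  · intro v hv n w
    have hm : ∀ m : ℕ, ∀ u : CR X m, mulChain v m u = ∑ z ∈ v.support, v z • consHom z m u := by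
      intro m u
      simp [mulChain, AddMonoidHom.finset_sum_apply]
    rw [mulChain, AddMonoidHom.finset_sum_apply, map_sum]
    simp only [AddMonoidHom.smul_apply, map_zsmul, d_consHom φ]
    rw [hm]
    simp only [smul_sub, Finset.sum_sub_distrib, ← Finset.sum_smul]
    have : (∑ z ∈ v.support, v z) = 0 := hv
    rw [this, zero_smul, zero_sub]
    simp
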